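/- Let Φ ∈ ℝ^{m×n}, let T ⊆ {1,…,n} with #T = s, and let k ≥ 1. Assume Φ satisfies the RIP of order s+2k with radius δ_{s+2k} ∈ (0,1) and the RIP of order 2k with radius δ_{2k} ∈ (0,1), and that δ_{2k}² + 2δ_{s+2k} < 1. Let x ∈ ℝⁿ, ε ≥ 0, and y = Φx + n with ‖n‖₂ ≤ ε, and let x* solve iBPDN. Set r = x − x_T, let T₀ be a set of k largest-magnitude entries of r, and let μ = √(δ_{s+2k}² + δ_{2k}²). Then ‖x − x*‖₂ ≤ C·ε + D·k^{−1/2}‖r − r_{T₀}‖₁, where C = 4√(1+δ_{s+2k})/(1 − δ_{s+2k} − μ) and D = 2(1 + μ − δ_{s+2k})/(1 − δ_{s+2k} − μ). (Note that δ_{2k}² + 2δ_{s+2k} < 1 guarantees 1 − δ_{s+2k} − μ > 0.) -/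

import Mathlib

open scoped BigOperators

/-- The Euclidean (ℓ₂) norm of a vector. -/
noncomputable def l2 {d : ℕ} (u : Fin d → ℝ) : ℝ := Real.sqrt (∑ i, (u i) ^ 2)

/-- The ℓ₁ norm of a vector. -/
noncomputable def l1 {d : ℕ} (u : Fin d → ℝ) : ℝ := ∑ i, |u i|

/-- `restr S u` equals `u` on `S` and `0` outside `S`. -/
def restr {n : ℕ} (S : Finset (Fin n)) (u : Fin n → ℝ) : Fin n → ℝ :=
  fun i => if i ∈ S then u i else 0

/-- Restricted Isometry Property of order `q` with radius `δ`. -/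
def RIP {m n : ℕ} (Φ : Matrix (Fin m) (Fin n) ℝ) (q : ℕ) (δ : ℝ) : Prop :=
  ∀ u : Fin n → ℝ, (Function.support u).ncard ≤ q →
    (1 - δ) * (l2 u) ^ 2 ≤ (l2 (Φ.mulVec u)) ^ 2 ∧
    (l2 (Φ.mulVec u)) ^ 2 ≤ (1 + δ) * (l2 u) ^ 2

/-- `xs` solves the innovative Basis Pursuit DeNoise program. -/
def solvesIBPDN {m n : ℕ} (Φ : Matrix (Fin m) (Fin n) ℝ) (y : Fin m → ℝ) (ε : ℝ)
    (T : Finset (Fin n)) (xs : Fin n → ℝ) : Prop :=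
  l2 (y - Φ.mulVec xs) ≤ ε ∧
  ∀ u : Fin n → ℝ, l2 (y - Φ.mulVec u) ≤ ε → l1 (restr Tᶜ xs) ≤ l1 (restr Tᶜ u)

/-- `S` is a set of largest-magnitude entries of `r`. -/
def isLargest {n : ℕ} (r : Fin n → ℝ) (S : Finset (Fin n)) : Prop :=
  ∀ i ∈ S, ∀ j ∉ S, |r j| ≤ |r i|

section basics
variable {d n : ℕ}

lemma l2_nonneg (u : Fin d → ℝ) : 0 ≤ l2 u := Real.sqrt_nonneg _

lemma l1_nonneg (u : Fin d → ℝ) : 0 ≤ l1 u :=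
  Finset.sum_nonneg fun i _ => abs_nonneg _

lemma l2_sq (u : Fin d → ℝ) : l2 u ^ 2 = ∑ i, (u i) ^ 2 :=
  Real.sq_sqrt (Finset.sum_nonneg fun i _ => sq_nonneg _)

lemma sq_le_l2_sq (u : Fin d → ℝ) {c : ℝ} (h : ∑ i, (u i) ^ 2 ≤ c) : l2 u ≤ Real.sqrt c := by
  rw [l2]; exact Real.sqrt_le_sqrt h

lemma l2_neg (u : Fin d → ℝ) : l2 (-u) = l2 u := by
  simp [l2]

lemma l2_smul (c : ℝ) (u : Fin d → ℝ) : l2 (c • u) = |c| * l2 u := by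
  simp only [l2, Pi.smul_apply, smul_eq_mul, mul_pow, ← Finset.mul_sum]
  rw [Real.sqrt_mul (sq_nonneg c), Real.sqrt_sq_eq_abs]

lemma cauchy (u v : Fin d → ℝ) : |∑ i, u i * v i| ≤ l2 u * l2 v := by
  have h := Finset.sum_mul_sq_le_sq_mul_sq Finset.univ u v
  calc |∑ i, u i * v i| = Real.sqrt ((∑ i, u i * v i) ^ 2) := (Real.sqrt_sq_eq_abs _).symm
    _ ≤ Real.sqrt ((∑ i, u i ^ 2) * ∑ i, v i ^ 2) := Real.sqrt_le_sqrt h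
    _ = l2 u * l2 v := by
        rw [Real.sqrt_mul (Finset.sum_nonneg fun i _ => sq_nonneg _)]; rfl

lemma l2_add_le (u v : Fin d → ℝ) : l2 (u + v) ≤ l2 u + l2 v := by
  have hc : ∑ i, u i * v i ≤ l2 u * l2 v := le_trans (le_abs_self _) (cauchy u v)
  have h1 : l2 (u + v) ^ 2 ≤ (l2 u + l2 v) ^ 2 := by
    rw [l2_sq]
    have : ∑ i, (u i + v i) ^ 2 = (∑ i, u i ^ 2) + 2 * (∑ i, u i * v i) + ∑ i, v i ^ 2 := by
      rw [Finset.mul_sum, ← Finset.sum_add_distrib, ← Finset.sum_add_distrib]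
      exact Finset.sum_congr rfl fun i _ => by ring
    have h2 := l2_sq u; have h3 := l2_sq v
    calc ∑ i, ((u + v) i) ^ 2 = (∑ i, u i ^ 2) + 2 * (∑ i, u i * v i) + ∑ i, v i ^ 2 := this
      _ ≤ l2 u ^ 2 + 2 * (l2 u * l2 v) + l2 v ^ 2 := by rw [h2, h3]; linarith
      _ = (l2 u + l2 v) ^ 2 := by ring
  calc l2 (u + v) = Real.sqrt (l2 (u + v) ^ 2) := (Real.sqrt_sq (l2_nonneg _)).symm
    _ ≤ Real.sqrt ((l2 u + l2 v) ^ 2) := Real.sqrt_le_sqrt h1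
    _ = l2 u + l2 v := Real.sqrt_sq (add_nonneg (l2_nonneg u) (l2_nonneg v))

lemma l1_restr (S : Finset (Fin n)) (u : Fin n → ℝ) :
    l1 (restr S u) = ∑ i ∈ S, |u i| := by
  rw [l1, ← Finset.sum_subset (Finset.subset_univ S)]
  · exact Finset.sum_congr rfl fun i hi => by simp [restr, hi]
  · intro i _ hi; simp [restr, hi]

lemma l2_restr_sq (S : Finset (Fin n)) (u : Fin n → ℝ) :
    l2 (restr S u) ^ 2 = ∑ i ∈ S, (u i) ^ 2 := by
  rw [l2_sq, ← Finset.sum_subset (Finset.subset_univ S)]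
  · exact Finset.sum_congr rfl fun i hi => by simp [restr, hi]
  · intro i _ hi; simp [restr, hi]

lemma restr_add (S : Finset (Fin n)) (u v : Fin n → ℝ) :
    restr S (u + v) = restr S u + restr S v := by
  funext i; simp only [restr, Pi.add_apply]; split <;> simp

lemma restr_union {S S' : Finset (Fin n)} (h : Disjoint S S') (u : Fin n → ℝ) :
    restr (S ∪ S') u = restr S u + restr S' u := by
  funext i
  simp only [restr, Pi.add_apply, Finset.mem_union]
  by_cases hS : i ∈ S
  · have : i ∉ S' := fun hS' => (Finset.disjoint_left.mp h hS) hS'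
    simp [hS, this]
  · by_cases hS' : i ∈ S' <;> simp [hS, hS']

lemma restr_compl_add (S : Finset (Fin n)) (u : Fin n → ℝ) :
    restr S u + restr Sᶜ u = u := by
  funext i; simp only [restr, Pi.add_apply, Finset.mem_compl]
  by_cases hS : i ∈ S <;> simp [hS]

lemma restr_sdiff {B A : Finset (Fin n)} (h : B ⊆ A) (u : Fin n → ℝ) :
    restr A u = restr B u + restr (A \ B) u := by
  rw [← restr_union (Finset.disjoint_sdiff), Finset.union_sdiff_of_subset h]

lemma l1_restr_mono {S S' : Finset (Fin n)} (h : S' ⊆ S) (u : Fin n → ℝ) :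
    l1 (restr S' u) ≤ l1 (restr S u) := by
  rw [l1_restr, l1_restr]
  exact Finset.sum_le_sum_of_subset_of_nonneg h fun i _ _ => abs_nonneg _

lemma l2_restr_mono {S S' : Finset (Fin n)} (h : S' ⊆ S) (u : Fin n → ℝ) :
    l2 (restr S' u) ≤ l2 (restr S u) := by
  have h2 : l2 (restr S' u) ^ 2 ≤ l2 (restr S u) ^ 2 := by
    rw [l2_restr_sq, l2_restr_sq]
    exact Finset.sum_le_sum_of_subset_of_nonneg h fun i _ _ => sq_nonneg _
  nlinarith [l2_nonneg (restr S' u), l2_nonneg (restr S u)]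

lemma l1_restr_sdiff {B A : Finset (Fin n)} (h : B ⊆ A) (u : Fin n → ℝ) :
    l1 (restr A u) = l1 (restr B u) + l1 (restr (A \ B) u) := by
  rw [l1_restr, l1_restr, l1_restr, add_comm, Finset.sum_sdiff h]

lemma support_restr_subset (S : Finset (Fin n)) (u : Fin n → ℝ) :
    Function.support (restr S u) ⊆ ↑S := by
  intro i hi
  simp only [Function.mem_support] at hi
  by_contra hc
  have hS : i ∉ S := fun h => hc (Finset.mem_coe.mpr h)
  exact hi (by simp [restr, hS])

lemma ncard_support_restr_le (S : Finset (Fin n)) (u : Fin n → ℝ) :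
    (Function.support (restr S u)).ncard ≤ S.card := by
  have := Set.ncard_le_ncard (support_restr_subset S u) S.finite_toSet
  simpa [Set.ncard_coe_finset] using this

lemma l1_le_add (u v : Fin d → ℝ) : l1 u ≤ l1 (u + v) + l1 v := by
  rw [l1, l1, l1, ← Finset.sum_add_distrib]
  apply Finset.sum_le_sum
  intro i _
  calc |u i| = |(u i + v i) + (- v i)| := by ring_nf
    _ ≤ |u i + v i| + |(- v i)| := abs_add_le _ _
    _ = |(u + v) i| + |v i| := by rw [abs_neg]; rfl

lemma l2_eq_zero {u : Fin d → ℝ} (h : l2 u = 0) : u = 0 := by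
  have h2 : ∑ i, (u i) ^ 2 = 0 := by
    have := l2_sq u; rw [h] at this; linarith [this.symm]
  funext i
  have := (Finset.sum_eq_zero_iff_of_nonneg (fun i _ => sq_nonneg (u i))).mp h2 i (Finset.mem_univ i)
  exact pow_eq_zero_iff (n := 2) (by norm_num) |>.mp this

lemma l2_bounded {S : Finset (Fin n)} {u : Fin n → ℝ} {c : ℝ} {k : ℕ} (hc : 0 ≤ c)
    (hcard : S.card ≤ k) (h : ∀ i ∈ S, |u i| ≤ c) :
    l2 (restr S u) ≤ Real.sqrt k * c := by
  have h1 : l2 (restr S u) ^ 2 ≤ k * c ^ 2 := by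
    rw [l2_restr_sq]
    calc ∑ i ∈ S, (u i) ^ 2 ≤ ∑ i ∈ S, c ^ 2 := by
          apply Finset.sum_le_sum; intro i hi
          calc (u i)^2 = |u i|^2 := (sq_abs _).symm
            _ ≤ c ^ 2 := by nlinarith [h i hi, abs_nonneg (u i)]
      _ = S.card * c ^ 2 := by rw [Finset.sum_const, nsmul_eq_mul]
      _ ≤ k * c ^ 2 := by
          have : (S.card : ℝ) ≤ k := Nat.cast_le.mpr hcard
          nlinarith [sq_nonneg c]
  have h2 : (0:ℝ) ≤ Real.sqrt k * c := mul_nonneg (Real.sqrt_nonneg _) hc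
  nlinarith [l2_nonneg (restr S u), Real.sq_sqrt (by positivity : (0:ℝ) ≤ (k:ℝ)),
    Real.sqrt_nonneg (k:ℝ)]

lemma l1_le_sqrt_card_l2 (S : Finset (Fin n)) (u : Fin n → ℝ) :
    l1 (restr S u) ≤ Real.sqrt S.card * l2 (restr S u) := by
  have h := Finset.sum_mul_sq_le_sq_mul_sq S (fun _ => (1:ℝ)) (fun i => |u i|)
  simp only [one_mul, one_pow, Finset.sum_const, nsmul_eq_mul, mul_one, sq_abs] at h
  have h1 : l1 (restr S u) ^ 2 ≤ S.card * l2 (restr S u) ^ 2 := by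
    rw [l1_restr, l2_restr_sq]; exact h
  nlinarith [l1_nonneg (restr S u), l2_nonneg (restr S u),
    Real.sq_sqrt (by positivity : (0:ℝ) ≤ (S.card:ℝ)), Real.sqrt_nonneg (S.card:ℝ),
    mul_nonneg (Real.sqrt_nonneg (S.card:ℝ)) (l2_nonneg (restr S u))]

lemma pyth {u v : Fin d → ℝ} (h : ∀ i, u i = 0 ∨ v i = 0) :
    l2 (u + v) ^ 2 = l2 u ^ 2 + l2 v ^ 2 := by
  rw [l2_sq, l2_sq, l2_sq, ← Finset.sum_add_distrib]
  apply Finset.sum_congr rfl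
  intro i _
  rcases h i with h0 | h0 <;> simp [h0]

end basics

section part2
variable {m n : ℕ}
open Matrix

lemma l2_zero : l2 (0 : Fin m → ℝ) = 0 := by simp [l2]

lemma l2_sq_dot (f : Fin m → ℝ) : l2 f ^ 2 = f ⬝ᵥ f := by
  rw [l2_sq]; simp [dotProduct, pow_two]

lemma four_dot (a b : Fin m → ℝ) :
    4 * (a ⬝ᵥ b) = l2 (a + b) ^ 2 - l2 (a - b) ^ 2 := by
  rw [l2_sq, l2_sq]
  simp only [Pi.add_apply, Pi.sub_apply, dotProduct]
  rw [← Finset.sum_sub_distrib, Finset.mul_sum]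
  exact Finset.sum_congr rfl fun i _ => by ring

lemma two_cs {δ1 δ2 a b : ℝ} (h1 : 0 ≤ δ1) (h2 : 0 ≤ δ2) (ha : 0 ≤ a) (hb : 0 ≤ b) :
    δ1 * a + δ2 * b ≤ Real.sqrt (δ1 ^ 2 + δ2 ^ 2) * Real.sqrt (a ^ 2 + b ^ 2) := by
  have key : (δ1 * a + δ2 * b) ^ 2 ≤ (δ1 ^ 2 + δ2 ^ 2) * (a ^ 2 + b ^ 2) := by
    nlinarith [sq_nonneg (δ1 * b - δ2 * a)]
  calc δ1 * a + δ2 * b = Real.sqrt ((δ1 * a + δ2 * b) ^ 2) :=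
        (Real.sqrt_sq (by positivity)).symm
    _ ≤ Real.sqrt ((δ1 ^ 2 + δ2 ^ 2) * (a ^ 2 + b ^ 2)) := Real.sqrt_le_sqrt key
    _ = _ := Real.sqrt_mul (by positivity) _

lemma ro {Φ : Matrix (Fin m) (Fin n) ℝ} {q : ℕ} {δ : ℝ} (hδ : 0 ≤ δ)
    (hR : RIP Φ q δ) {u v : Fin n → ℝ} {P Q : Finset (Fin n)}
    (hu : Function.support u ⊆ ↑P) (hv : Function.support v ⊆ ↑Q)
    (hPQ : Disjoint P Q) (hq : P.card + Q.card ≤ q) :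
    |Φ.mulVec u ⬝ᵥ Φ.mulVec v| ≤ δ * l2 u * l2 v := by
  have hdisj : ∀ i, u i = 0 ∨ v i = 0 := by
    intro i
    by_contra hcon
    push_neg at hcon
    exact Finset.disjoint_left.mp hPQ (hu hcon.1) (hv hcon.2)
  rcases eq_or_lt_of_le (l2_nonneg u) with h0 | hapos
  · have hu0 : u = 0 := l2_eq_zero h0.symm
    simp [hu0, Matrix.mulVec_zero, zero_dotProduct, l2_zero]
  rcases eq_or_lt_of_le (l2_nonneg v) with h0 | hbpos
  · have hv0 : v = 0 := l2_eq_zero h0.symm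
    simp [hv0, Matrix.mulVec_zero, dotProduct_zero, l2_zero]
  set a := l2 u
  set b := l2 v
  set u' : Fin n → ℝ := b • u with hu'
  set v' : Fin n → ℝ := a • v with hv'
  have hu'supp : Function.support u' ⊆ ↑P := by
    intro i hi
    apply hu
    simp only [Function.mem_support, hu', Pi.smul_apply, smul_eq_mul] at hi ⊢
    exact fun h => hi (by rw [h, mul_zero])
  have hv'supp : Function.support v' ⊆ ↑Q := by
    intro i hi
    apply hv
    simp only [Function.mem_support, hv', Pi.smul_apply, smul_eq_mul] at hi ⊢
    exact fun h => hi (by rw [h, mul_zero])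
  have hdisj' : ∀ i, u' i = 0 ∨ v' i = 0 := by
    intro i
    rcases hdisj i with h | h
    · left; simp [hu', h]
    · right; simp [hv', h]
  have hne : ∀ i, (-v') i = 0 ∨ (0:ℝ) = 0 := fun _ => Or.inr rfl
  have key : ∀ w : Fin n → ℝ, Function.support w ⊆ ↑(P ∪ Q) →
      (Function.support w).ncard ≤ q := by
    intro w hw
    calc (Function.support w).ncard ≤ (↑(P ∪ Q) : Set (Fin n)).ncard :=
          Set.ncard_le_ncard hw (P ∪ Q).finite_toSet
      _ = (P ∪ Q).card := Set.ncard_coe_finset _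
      _ ≤ P.card + Q.card := Finset.card_union_le _ _
      _ ≤ q := hq
  have hsupadd : Function.support (u' + v') ⊆ ↑(P ∪ Q) := by
    intro i hi
    simp only [Function.mem_support, Pi.add_apply] at hi
    rw [Finset.coe_union]
    by_cases h : u' i = 0
    · exact Or.inr (hv'supp (by simp [Function.mem_support]; intro h'; exact hi (by rw [h, h', add_zero])))
    · exact Or.inl (hu'supp h)
  have hsupsub : Function.support (u' - v') ⊆ ↑(P ∪ Q) := by
    intro i hi
    simp only [Function.mem_support, Pi.sub_apply] at hi
    rw [Finset.coe_union]
    by_cases h : u' i = 0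
    · refine Or.inr (hv'supp ?_)
      simp only [Function.mem_support]
      intro h'; exact hi (by rw [h, h', sub_zero])
    · exact Or.inl (hu'supp h)
  have hl2u' : l2 u' = b * a := by rw [hu', l2_smul, abs_of_nonneg (l2_nonneg v)]
  have hl2v' : l2 v' = a * b := by rw [hv', l2_smul, abs_of_nonneg (l2_nonneg u)]
  have hpy1 : l2 (u' + v') ^ 2 = 2 * (a * b) ^ 2 := by
    rw [pyth hdisj', hl2u', hl2v']; ring
  have hpy2 : l2 (u' - v') ^ 2 = 2 * (a * b) ^ 2 := by
    have : u' - v' = u' + (-v') := by ring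
    rw [this, pyth (fun i => (hdisj' i).imp id (fun h => by simp [h])), hl2u']
    rw [l2_neg, hl2v']; ring
  have hR1 := hR (u' + v') (key _ hsupadd)
  have hR2 := hR (u' - v') (key _ hsupsub)
  rw [Matrix.mulVec_add] at hR1
  rw [Matrix.mulVec_sub] at hR2
  have hfd := four_dot (Φ.mulVec u') (Φ.mulVec v')
  have hdot' : Φ.mulVec u' ⬝ᵥ Φ.mulVec v' = a * b * (Φ.mulVec u ⬝ᵥ Φ.mulVec v) := by
    rw [hu', hv', Matrix.mulVec_smul, Matrix.mulVec_smul, smul_dotProduct, dotProduct_smul]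
    simp [smul_eq_mul]; ring
  rw [hpy1] at hR1
  rw [hpy2] at hR2
  rw [hdot'] at hfd
  have hab : 0 < a * b := mul_pos hapos hbpos
  rw [abs_le]
  constructor
  · nlinarith [hR1.1, hR2.2, hfd]
  · nlinarith [hR1.2, hR2.1, hfd]

lemma l2_list_sum_le : ∀ L : List (Fin n → ℝ), l2 L.sum ≤ (L.map l2).sum := by
  intro L
  induction L with
  | nil => simp [l2_zero]
  | cons v L ih =>
    simp only [List.sum_cons, List.map_cons]
    calc l2 (v + L.sum) ≤ l2 v + l2 L.sum := l2_add_le _ _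
      _ ≤ l2 v + (L.map l2).sum := by linarith

lemma dot_mulVec_list_sum (Φ : Matrix (Fin m) (Fin n) ℝ) (a : Fin m → ℝ) :
    ∀ L : List (Fin n → ℝ),
      a ⬝ᵥ Φ.mulVec L.sum = (L.map (fun v => a ⬝ᵥ Φ.mulVec v)).sum := by
  intro L
  induction L with
  | nil => simp [Matrix.mulVec_zero]
  | cons v L ih =>
    simp only [List.sum_cons, List.map_cons, Matrix.mulVec_add, dotProduct_add]
    rw [ih]

lemma ex_largest {n : ℕ} (w : Fin n → ℝ) :
    ∀ (k : ℕ) (A : Finset (Fin n)), ∃ B, B ⊆ A ∧ B.card = min k A.card ∧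
      ∀ i ∈ B, ∀ j ∈ A \ B, |w j| ≤ |w i| := by
  intro k
  induction k with
  | zero => intro A; exact ⟨∅, Finset.empty_subset A, by simp, by simp⟩
  | succ k ih =>
    intro A
    rcases A.eq_empty_or_nonempty with rfl | hA
    · exact ⟨∅, by simp, by simp, by simp⟩
    · obtain ⟨i₀, hi₀A, hi₀max⟩ := A.exists_max_image (fun i => |w i|) hA
      obtain ⟨B', hB'sub, hB'card, hB'max⟩ := ih (A.erase i₀)
      have hi₀B' : i₀ ∉ B' := fun h => (Finset.notMem_erase i₀ A) (hB'sub h)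
      refine ⟨insert i₀ B', ?_, ?_, ?_⟩
      · exact Finset.insert_subset hi₀A (hB'sub.trans (Finset.erase_subset _ _))
      · rw [Finset.card_insert_of_notMem hi₀B', hB'card, Finset.card_erase_of_mem hi₀A]
        have := Finset.card_pos.mpr hA
        omega
      · intro i hi j hj
        rcases Finset.mem_insert.mp hi with rfl | hiB'
        · exact hi₀max j (Finset.mem_sdiff.mp hj).1
        · apply hB'max i hiB' j
          rw [Finset.mem_sdiff] at hj ⊢
          refine ⟨Finset.mem_erase.mpr ⟨?_, hj.1⟩,
            fun h => hj.2 (Finset.mem_insert_of_mem h)⟩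
          rintro rfl; exact hj.2 (Finset.mem_insert_self _ _)

lemma sqrt_mul_inv {k : ℕ} (hk : 1 ≤ k) :
    Real.sqrt k * ((k:ℝ))⁻¹ = (Real.sqrt k)⁻¹ := by
  have hkpos : (0:ℝ) < (k:ℝ) := by exact_mod_cast hk
  have hs : (0:ℝ) < Real.sqrt k := Real.sqrt_pos.mpr hkpos
  field_simp
  exact Real.sq_sqrt hkpos.le

lemma decomp {n k : ℕ} (hk : 1 ≤ k) (w : Fin n → ℝ) :
    ∀ (N : ℕ) (A : Finset (Fin n)), A.card ≤ N → ∀ c : ℝ, 0 ≤ c → (∀ j ∈ A, |w j| ≤ c) →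
    ∃ L : List (Finset (Fin n)),
      (∀ B ∈ L, B ⊆ A ∧ B.card ≤ k) ∧
      restr A w = (L.map (fun B => restr B w)).sum ∧
      (L.map (fun B => l2 (restr B w))).sum ≤
        Real.sqrt k * c + (Real.sqrt k)⁻¹ * l1 (restr A w) := by
  intro N
  induction N with
  | zero =>
    intro A hA c hc _
    have hAe : A = ∅ := Finset.card_eq_zero.mp (Nat.le_zero.mp hA)
    subst hAe
    refine ⟨[], by simp, ?_, ?_⟩
    · funext i; simp [restr]
    · simp only [List.map_nil, List.sum_nil]
      have : 0 ≤ l1 (restr (∅ : Finset (Fin n)) w) := l1_nonneg _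
      positivity
  | succ N ih =>
    intro A hA c hc hbound
    rcases le_or_gt A.card k with hle | hgt
    · refine ⟨[A], ?_, by simp, ?_⟩
      · intro B hB; rw [List.mem_singleton] at hB; subst hB; exact ⟨subset_rfl, hle⟩
      · simp only [List.map_cons, List.map_nil, List.sum_cons, List.sum_nil, add_zero]
        have h1 : l2 (restr A w) ≤ Real.sqrt k * c := l2_bounded hc hle hbound
        have h2 : 0 ≤ (Real.sqrt k)⁻¹ * l1 (restr A w) := by
          have := l1_nonneg (restr A w); positivity
        linarith
    · obtain ⟨B, hBsub, hBcard, hBmax⟩ := ex_largest w k A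
      have hBk : B.card = k := by omega
      have hck : 0 ≤ ((k:ℝ))⁻¹ * l1 (restr B w) := by
        have := l1_nonneg (restr B w); positivity
      have hkpos : (0:ℝ) < (k:ℝ) := by exact_mod_cast hk
      have hbound' : ∀ j ∈ A \ B, |w j| ≤ ((k:ℝ))⁻¹ * l1 (restr B w) := by
        intro j hj
        have hsum : (k:ℝ) * |w j| ≤ l1 (restr B w) := by
          rw [l1_restr]
          calc (k:ℝ) * |w j| = ∑ _i ∈ B, |w j| := by
                rw [Finset.sum_const, nsmul_eq_mul, hBk]
            _ ≤ ∑ i ∈ B, |w i| := Finset.sum_le_sum fun i hi => hBmax i hi j hj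
        rw [inv_mul_eq_div, le_div_iff₀ hkpos]
        linarith
      have hcard' : (A \ B).card ≤ N := by
        have := Finset.card_sdiff_of_subset hBsub
        omega
      obtain ⟨L', hL'1, hL'2, hL'3⟩ := ih (A \ B) hcard' _ hck hbound'
      refine ⟨B :: L', ?_, ?_, ?_⟩
      · intro C hC
        rcases List.mem_cons.mp hC with rfl | h
        · exact ⟨hBsub, le_of_eq hBk⟩
        · exact ⟨((hL'1 C h).1).trans (Finset.sdiff_subset), (hL'1 C h).2⟩
      · simp only [List.map_cons, List.sum_cons, ← hL'2]
        exact restr_sdiff hBsub w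
      · simp only [List.map_cons, List.sum_cons]
        have h1 : l2 (restr B w) ≤ Real.sqrt k * c :=
          l2_bounded hc (le_of_eq hBk) (fun i hi => hbound i (hBsub hi))
        have h2 : Real.sqrt k * (((k:ℝ))⁻¹ * l1 (restr B w)) =
            (Real.sqrt k)⁻¹ * l1 (restr B w) := by
          rw [← mul_assoc, sqrt_mul_inv hk]
        have h4 : (Real.sqrt k)⁻¹ * l1 (restr A w) =
            (Real.sqrt k)⁻¹ * l1 (restr B w) + (Real.sqrt k)⁻¹ * l1 (restr (A \ B) w) := by
          rw [l1_restr_sdiff hBsub]; ring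
        linarith [hL'3]

end part2

section more
variable {m n : ℕ}
open Matrix

lemma l1_restr_union {D A : Finset (Fin n)} (hd : Disjoint D A) (w : Fin n → ℝ) :
    l1 (restr (D ∪ A) w) = l1 (restr D w) + l1 (restr A w) := by
  rw [l1_restr, l1_restr, l1_restr, Finset.sum_union hd]

lemma list_abs_sum_le {α : Type*} (L : List α) (f g : α → ℝ)
    (h : ∀ a ∈ L, |f a| ≤ g a) : |(L.map f).sum| ≤ (L.map g).sum := by
  induction L with
  | nil => simp
  | cons a L ih =>
    simp only [List.map_cons, List.sum_cons]
    calc |f a + (L.map f).sum| ≤ |f a| + |(L.map f).sum| := abs_add_le _ _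
      _ ≤ g a + (L.map g).sum := by
          have h1 := h a List.mem_cons_self
          have h2 := ih fun b hb => h b (List.mem_cons_of_mem a hb)
          linarith

lemma list_sum_mul_left {α : Type*} (L : List α) (c : ℝ) (f : α → ℝ) :
    (L.map (fun a => c * f a)).sum = c * (L.map f).sum := by
  induction L with
  | nil => simp
  | cons a L ih => simp only [List.map_cons, List.sum_cons, ih]; ring

end more

set_option maxHeartbeats 1000000 in
open Matrix in
/-- **Theorem 1 (ℓ₂–ℓ₁ instance optimality of iBPDN).** -/
theorem ibpdn_instance_optimality
    {m n : ℕ} (Φ : Matrix (Fin m) (Fin n) ℝ)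
    (T : Finset (Fin n)) (s k : ℕ) (hs : T.card = s) (hk : 1 ≤ k)
    (δsk δk : ℝ) (hδsk : δsk ∈ Set.Ioo (0 : ℝ) 1) (hδk : δk ∈ Set.Ioo (0 : ℝ) 1)
    (hRIPsk : RIP Φ (s + 2 * k) δsk) (hRIPk : RIP Φ (2 * k) δk)
    (hcond : δk ^ 2 + 2 * δsk < 1)
    (x : Fin n → ℝ) (ε : ℝ) (hε : 0 ≤ ε)
    (nse : Fin m → ℝ) (hnse : l2 nse ≤ ε)
    (y : Fin m → ℝ) (hy : y = Φ.mulVec x + nse)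
    (xstar : Fin n → ℝ) (hsol : solvesIBPDN Φ y ε T xstar)
    (r : Fin n → ℝ) (hr : r = x - restr T x)
    (T₀ : Finset (Fin n)) (hT₀card : T₀.card = k) (hT₀ : isLargest r T₀)
    (μ : ℝ) (hμ : μ = Real.sqrt (δsk ^ 2 + δk ^ 2)) :
    l2 (x - xstar) ≤
      (4 * Real.sqrt (1 + δsk) / (1 - δsk - μ)) * ε
        + (2 * (1 + μ - δsk) / (1 - δsk - μ)) *
            ((Real.sqrt k)⁻¹ * l1 (r - restr T₀ r)) := by
  obtain ⟨hδsk0, hδsk1⟩ := hδsk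
  obtain ⟨hδk0, hδk1⟩ := hδk
  have hμ0 : 0 ≤ μ := hμ ▸ Real.sqrt_nonneg _
  have hγ : 0 < 1 - δsk - μ := by
    have h1 : μ < 1 - δsk := by
      rw [hμ, Real.sqrt_lt' (by linarith)]
      nlinarith
    linarith
  have hkpos : (0:ℝ) < (k:ℝ) := by exact_mod_cast hk
  have hskpos : (0:ℝ) < Real.sqrt k := Real.sqrt_pos.mpr hkpos
  have hskinv : (0:ℝ) ≤ (Real.sqrt k)⁻¹ := by positivity
  -- the error vector
  set h : Fin n → ℝ := xstar - x with hh
  have hxs : xstar = x + h := by funext i; simp [hh]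
  have hl2x : l2 (x - xstar) = l2 h := by
    have : x - xstar = -h := by funext i; simp [hh]
    rw [this, l2_neg]
  -- sets
  set S : Finset (Fin n) := T ∪ T₀ with hS
  set A : Finset (Fin n) := Sᶜ with hA
  have hScard : S.card ≤ s + k := by
    calc S.card ≤ T.card + T₀.card := Finset.card_union_le _ _
      _ = s + k := by rw [hs, hT₀card]
  -- r facts
  have hrx : r = restr Tᶜ x := by
    rw [hr]; funext i
    simp only [Pi.sub_apply, restr, Finset.mem_compl]
    by_cases hi : i ∈ T <;> simp [hi]
  have he0 : l1 (r - restr T₀ r) = l1 (restr A x) := by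
    have : r - restr T₀ r = restr A x := by
      funext i
      simp only [Pi.sub_apply, hrx, restr, hA, hS, Finset.mem_compl, Finset.mem_union]
      by_cases hiT : i ∈ T <;> by_cases hiT₀ : i ∈ T₀ <;> simp [hiT, hiT₀]
    rw [this]
  -- T₁ : k largest entries of h within A
  obtain ⟨T₁, hT₁sub, hT₁card, hT₁max⟩ := ex_largest h k A
  have hT₁k : T₁.card ≤ k := by omega
  -- bound on A \ T₁
  set c : ℝ := ((k:ℝ))⁻¹ * l1 (restr T₁ h) with hcdef
  have hc : 0 ≤ c := by
    have := l1_nonneg (restr T₁ h); rw [hcdef]; positivity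
  have hbound : ∀ j ∈ A \ T₁, |h j| ≤ c := by
    intro j hj
    have hkA : k ≤ A.card := by
      by_contra hlt
      push_neg at hlt
      have hTA : T₁ = A := Finset.eq_of_subset_of_card_le hT₁sub (by omega)
      rw [hTA] at hj
      simp at hj
    have hT₁full : T₁.card = k := by omega
    have hsum : (k:ℝ) * |h j| ≤ l1 (restr T₁ h) := by
      rw [l1_restr]
      calc (k:ℝ) * |h j| = ∑ _i ∈ T₁, |h j| := by
            rw [Finset.sum_const, nsmul_eq_mul, hT₁full]
        _ ≤ ∑ i ∈ T₁, |h i| := Finset.sum_le_sum fun i hi => hT₁max i hi j hj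
    rw [hcdef, inv_mul_eq_div, le_div_iff₀ hkpos]
    linarith
  -- block decomposition of A \ T₁
  obtain ⟨L, hL1, hL2, hL3⟩ := decomp hk h (A \ T₁).card (A \ T₁) le_rfl c hc hbound
  -- the main head vector
  set g : Fin n → ℝ := restr (S ∪ T₁) h with hg
  set G : ℝ := l2 g with hG
  have hG0 : 0 ≤ G := l2_nonneg g
  set Z : ℝ := (Real.sqrt k)⁻¹ * l1 (restr A h) with hZ
  set E : ℝ := (Real.sqrt k)⁻¹ * l1 (restr A x) with hE
  have hE0 : 0 ≤ E := by
    have := l1_nonneg (restr A x); rw [hE]; positivity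
  -- tail sum bound
  have hsum3 : (L.map (fun B => l2 (restr B h))).sum ≤ Z := by
    have hAsplit : l1 (restr A h) = l1 (restr T₁ h) + l1 (restr (A \ T₁) h) :=
      l1_restr_sdiff hT₁sub h
    have h2 : Real.sqrt k * c = (Real.sqrt k)⁻¹ * l1 (restr T₁ h) := by
      rw [hcdef, ← mul_assoc, sqrt_mul_inv hk]
    have h4 : Z = (Real.sqrt k)⁻¹ * l1 (restr T₁ h)
        + (Real.sqrt k)⁻¹ * l1 (restr (A \ T₁) h) := by
      rw [hZ, hAsplit]; ring
    linarith [hL3]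
  -- decomposition of h
  have hcompl : (S ∪ T₁)ᶜ = A \ T₁ := by
    ext i
    simp only [Finset.mem_compl, Finset.mem_union, Finset.mem_sdiff, hA]
    tauto
  have hdecomp : h = g + (L.map (fun B => restr B h)).sum := by
    have hre := restr_compl_add (S ∪ T₁) h
    rw [hcompl, hL2] at hre
    rw [hg]
    exact hre.symm
  -- feasibility of x and the cone constraint
  have hfeas : l2 (y - Φ.mulVec x) ≤ ε := by
    have : y - Φ.mulVec x = nse := by rw [hy]; funext i; simp
    rw [this]; exact hnse
  have hopt := hsol.2 x hfeas
  set D : Finset (Fin n) := Tᶜ ∩ T₀ with hD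
  have hTc : Tᶜ = D ∪ A := by
    ext i
    simp only [hD, hA, hS, Finset.mem_compl, Finset.mem_union, Finset.mem_inter]
    tauto
  have hDA : Disjoint D A := by
    rw [Finset.disjoint_left]
    intro i hiD hiA
    rw [hA, hS, Finset.mem_compl, Finset.mem_union] at hiA
    exact hiA (Or.inr (Finset.mem_inter.mp hiD).2)
  have hcone : l1 (restr A h) ≤ l1 (restr T₀ h) + 2 * l1 (restr A x) := by
    have e1 : l1 (restr Tᶜ xstar) = l1 (restr D (x + h)) + l1 (restr A (x + h)) := by
      rw [hxs, hTc, l1_restr_union hDA]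
    have e2 : l1 (restr Tᶜ x) = l1 (restr D x) + l1 (restr A x) := by
      rw [hTc, l1_restr_union hDA]
    have e3 : l1 (restr D x) ≤ l1 (restr D (x + h)) + l1 (restr D h) := by
      have := l1_le_add (restr D x) (restr D h)
      rwa [← restr_add] at this
    have e4 : l1 (restr A h) ≤ l1 (restr A (x + h)) + l1 (restr A x) := by
      have := l1_le_add (restr A h) (restr A x)
      rwa [← restr_add, show h + x = x + h from add_comm h x] at this
    have e5 : l1 (restr D h) ≤ l1 (restr T₀ h) :=
      l1_restr_mono Finset.inter_subset_right h
    rw [e1, e2] at hopt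
    linarith
  -- key intermediate bound [*]
  have hT₀SU : T₀ ⊆ S ∪ T₁ :=
    fun i hi => Finset.mem_union_left _ (Finset.mem_union_right _ hi)
  have hstar : Z ≤ G + 2 * E := by
    have h1 : l1 (restr T₀ h) ≤ Real.sqrt k * l2 (restr T₀ h) := by
      have := l1_le_sqrt_card_l2 T₀ h
      rwa [hT₀card] at this
    have h2 : l2 (restr T₀ h) ≤ G := l2_restr_mono hT₀SU h
    have h3 : l1 (restr A h) ≤ Real.sqrt k * G + 2 * l1 (restr A x) := by
      nlinarith [hcone]
    have h4 := mul_le_mul_of_nonneg_left h3 hskinv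
    rw [hZ, hE]
    calc (Real.sqrt k)⁻¹ * l1 (restr A h)
        ≤ (Real.sqrt k)⁻¹ * (Real.sqrt k * G + 2 * l1 (restr A x)) := h4
      _ = ((Real.sqrt k)⁻¹ * Real.sqrt k) * G
          + 2 * ((Real.sqrt k)⁻¹ * l1 (restr A x)) := by ring
      _ = G + 2 * ((Real.sqrt k)⁻¹ * l1 (restr A x)) := by
          rw [inv_mul_cancel₀ hskpos.ne', one_mul]
  -- RIP facts
  have hΦh : l2 (Φ.mulVec h) ≤ 2 * ε := by
    have hre : Φ.mulVec h = -(y - Φ.mulVec xstar) + (y - Φ.mulVec x) := by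
      rw [hh, Matrix.mulVec_sub]
      funext i; simp
    rw [hre]
    calc l2 (-(y - Φ.mulVec xstar) + (y - Φ.mulVec x))
        ≤ l2 (-(y - Φ.mulVec xstar)) + l2 (y - Φ.mulVec x) := l2_add_le _ _
      _ = l2 (y - Φ.mulVec xstar) + l2 (y - Φ.mulVec x) := by rw [l2_neg]
      _ ≤ ε + ε := add_le_add hsol.1 hfeas
      _ = 2 * ε := by ring
  have hgsupp : (Function.support g).ncard ≤ s + 2 * k := by
    calc (Function.support g).ncard ≤ (S ∪ T₁).card := ncard_support_restr_le _ _
      _ ≤ S.card + T₁.card := Finset.card_union_le _ _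
      _ ≤ s + 2 * k := by omega
  have hRg := hRIPsk g hgsupp
  have hΦgup : l2 (Φ.mulVec g) ≤ Real.sqrt (1 + δsk) * G := by
    calc l2 (Φ.mulVec g) = Real.sqrt (l2 (Φ.mulVec g) ^ 2) :=
          (Real.sqrt_sq (l2_nonneg _)).symm
      _ ≤ Real.sqrt ((1 + δsk) * G ^ 2) := Real.sqrt_le_sqrt hRg.2
      _ = Real.sqrt (1 + δsk) * G := by
          rw [Real.sqrt_mul (by linarith), Real.sqrt_sq hG0]
  -- inner product expansion
  have hdotexp : Φ.mulVec g ⬝ᵥ Φ.mulVec h =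
      l2 (Φ.mulVec g) ^ 2 + (L.map (fun B => Φ.mulVec g ⬝ᵥ Φ.mulVec (restr B h))).sum := by
    conv_lhs => rw [hdecomp]
    rw [Matrix.mulVec_add, dotProduct_add, l2_sq_dot,
      dot_mulVec_list_sum Φ (Φ.mulVec g) (L.map (fun B => restr B h)), List.map_map]
    rfl
  -- restricted orthogonality bound on each tail term
  have hgsplit : g = restr S h + restr T₁ h := by
    rw [hg, restr_union]
    rw [Finset.disjoint_left]
    intro i hiS hiT₁
    exact (Finset.mem_compl.mp (hT₁sub hiT₁)) hiS
  have hpyg : l2 (restr S h) ^ 2 + l2 (restr T₁ h) ^ 2 = G ^ 2 := by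
    rw [hG, hgsplit]
    rw [pyth]
    intro i
    by_cases hiS : i ∈ S
    · right
      have : i ∉ T₁ := fun hiT₁ => (Finset.mem_compl.mp (hT₁sub hiT₁)) hiS
      simp [restr, this]
    · left; simp [restr, hiS]
  have hterm : ∀ B ∈ L, |Φ.mulVec g ⬝ᵥ Φ.mulVec (restr B h)| ≤ μ * G * l2 (restr B h) := by
    intro B hB
    obtain ⟨hBsub, hBk⟩ := hL1 B hB
    have hBA : B ⊆ A := hBsub.trans (Finset.sdiff_subset)
    have hBnotT₁ : ∀ i ∈ B, i ∉ T₁ := fun i hi => (Finset.mem_sdiff.mp (hBsub hi)).2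
    have hSB : Disjoint S B := by
      rw [Finset.disjoint_left]
      intro i hiS hiB
      exact (Finset.mem_compl.mp (hBA hiB)) hiS
    have hT₁B : Disjoint T₁ B := by
      rw [Finset.disjoint_left]
      intro i hiT₁ hiB
      exact hBnotT₁ i hiB hiT₁
    have hro1 := ro hδsk0.le hRIPsk (support_restr_subset S h) (support_restr_subset B h)
      hSB (by omega)
    have hro2 := ro hδk0.le hRIPk (support_restr_subset T₁ h) (support_restr_subset B h)
      hT₁B (by omega)
    have hsplit : Φ.mulVec g ⬝ᵥ Φ.mulVec (restr B h) =
        Φ.mulVec (restr S h) ⬝ᵥ Φ.mulVec (restr B h)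
        + Φ.mulVec (restr T₁ h) ⬝ᵥ Φ.mulVec (restr B h) := by
      rw [hgsplit, Matrix.mulVec_add, add_dotProduct]
    have hcs2 : δsk * l2 (restr S h) + δk * l2 (restr T₁ h) ≤ μ * G := by
      have := two_cs hδsk0.le hδk0.le (l2_nonneg (restr S h)) (l2_nonneg (restr T₁ h))
      rw [hpyg] at this
      rw [hμ]
      calc δsk * l2 (restr S h) + δk * l2 (restr T₁ h)
          ≤ Real.sqrt (δsk ^ 2 + δk ^ 2) * Real.sqrt (G ^ 2) := this
        _ = Real.sqrt (δsk ^ 2 + δk ^ 2) * G := by rw [Real.sqrt_sq hG0]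
    calc |Φ.mulVec g ⬝ᵥ Φ.mulVec (restr B h)|
        ≤ |Φ.mulVec (restr S h) ⬝ᵥ Φ.mulVec (restr B h)|
          + |Φ.mulVec (restr T₁ h) ⬝ᵥ Φ.mulVec (restr B h)| := by
          rw [hsplit]; exact abs_add_le _ _
      _ ≤ δsk * l2 (restr S h) * l2 (restr B h)
          + δk * l2 (restr T₁ h) * l2 (restr B h) := add_le_add hro1 hro2
      _ = (δsk * l2 (restr S h) + δk * l2 (restr T₁ h)) * l2 (restr B h) := by ring
      _ ≤ μ * G * l2 (restr B h) :=
          mul_le_mul_of_nonneg_right hcs2 (l2_nonneg _)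
  -- sum of tail terms
  have htails : |(L.map (fun B => Φ.mulVec g ⬝ᵥ Φ.mulVec (restr B h))).sum| ≤ μ * G * Z := by
    calc |(L.map (fun B => Φ.mulVec g ⬝ᵥ Φ.mulVec (restr B h))).sum|
        ≤ (L.map (fun B => μ * G * l2 (restr B h))).sum := list_abs_sum_le L _ _ hterm
      _ = μ * G * (L.map (fun B => l2 (restr B h))).sum := list_sum_mul_left L _ _
      _ ≤ μ * G * Z := by
          have hμG : 0 ≤ μ * G := mul_nonneg hμ0 hG0
          exact mul_le_mul_of_nonneg_left hsum3 hμG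
  -- key quadratic inequality
  have hcauchy : Φ.mulVec g ⬝ᵥ Φ.mulVec h ≤ l2 (Φ.mulVec g) * l2 (Φ.mulVec h) := by
    have := cauchy (Φ.mulVec g) (Φ.mulVec h)
    exact le_trans (le_abs_self _) this
  have hdotub : Φ.mulVec g ⬝ᵥ Φ.mulVec h ≤ Real.sqrt (1 + δsk) * G * (2 * ε) := by
    calc Φ.mulVec g ⬝ᵥ Φ.mulVec h ≤ l2 (Φ.mulVec g) * l2 (Φ.mulVec h) := hcauchy
      _ ≤ (Real.sqrt (1 + δsk) * G) * (2 * ε) := by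
          apply mul_le_mul hΦgup hΦh (l2_nonneg _)
          positivity
  have hkey : (1 - δsk) * G ^ 2 ≤ Real.sqrt (1 + δsk) * G * (2 * ε) + μ * G * Z := by
    have hlow := hRg.1
    have : l2 (Φ.mulVec g) ^ 2 = Φ.mulVec g ⬝ᵥ Φ.mulVec h
        - (L.map (fun B => Φ.mulVec g ⬝ᵥ Φ.mulVec (restr B h))).sum := by
      rw [hdotexp]; ring
    have habs := abs_le.mp htails
    linarith [hlow, hdotub, this]
  have hkey2 : (1 - δsk - μ) * G ^ 2 ≤
      G * (2 * Real.sqrt (1 + δsk) * ε + 2 * μ * E) := by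
    have hμG : 0 ≤ μ * G := mul_nonneg hμ0 hG0
    have := mul_le_mul_of_nonneg_left hstar hμG
    nlinarith [hkey]
  have hGR : (1 - δsk - μ) * G ≤ 2 * Real.sqrt (1 + δsk) * ε + 2 * μ * E := by
    rcases hG0.eq_or_lt with hG0' | hGpos
    · rw [← hG0']
      have h1 : (0:ℝ) ≤ Real.sqrt (1 + δsk) := Real.sqrt_nonneg _
      nlinarith
    · nlinarith [hkey2]
  -- final length bound
  have h2h : l2 h ≤ 2 * G + 2 * E := by
    have h1 : l2 h ≤ G + (L.map (fun B => l2 (restr B h))).sum := by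
      conv_lhs => rw [hdecomp]
      calc l2 (g + (L.map (fun B => restr B h)).sum)
          ≤ l2 g + l2 ((L.map (fun B => restr B h)).sum) := l2_add_le _ _
        _ ≤ G + ((L.map (fun B => restr B h)).map l2).sum := by
            have := l2_list_sum_le (L.map (fun B => restr B h))
            rw [hG]; linarith
        _ = G + (L.map (fun B => l2 (restr B h))).sum := by rw [List.map_map]; rfl
    linarith [hsum3, hstar]
  have hgoal' : (1 - δsk - μ) * l2 h ≤ 4 * Real.sqrt (1 + δsk) * ε + 2 * (1 + μ - δsk) * E := by
    have hm := mul_le_mul_of_nonneg_left h2h hγ.le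
    linarith [hm, hGR]
  -- conclude
  rw [hl2x, he0]
  have hRHS : (4 * Real.sqrt (1 + δsk) / (1 - δsk - μ)) * ε
      + (2 * (1 + μ - δsk) / (1 - δsk - μ)) * ((Real.sqrt k)⁻¹ * l1 (restr A x))
      = (4 * Real.sqrt (1 + δsk) * ε + 2 * (1 + μ - δsk) * E) / (1 - δsk - μ) := by
    rw [hE]; field_simp
  rw [hRHS, le_div_iff₀ hγ]
  linarith [hgoal']
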